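/- Let H be a finite-dimensional complex inner product space, Γ a self-adjoint involution on H (Γ² = 1, Γ* = Γ), and D a self-adjoint operator anti-commuting with Γ. Write H = H₊ ⊕ H₋ for the ±1 eigenspaces of Γ and D₊ : H₊ → H₋, D₋ : H₋ → H₊ for the corresponding components of D. Then for any m > 0, the index of D, defined as dim ker D₊ − dim ker D₋, equals half the difference of the signatures of D + mΓ and D − mΓ, i.e. ind(D) = (η(D+mΓ) − η(D−mΓ))/2, where η(T) denotes the number of positive eigenvalues minus the number of negative eigenvalues of T counted with multiplicity. -/

import Mathlib

open Module LinearMap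

/-- The signature (number of positive eigenvalues minus number of negative
eigenvalues, counted with multiplicity) of an operator on a complex inner
product space, computed via the dimensions of the sums of eigenspaces with
positive (resp. negative) real eigenvalues. -/
noncomputable def eta {H : Type*} [NormedAddCommGroup H] [InnerProductSpace ℂ H]
    (T : H →ₗ[ℂ] H) : ℤ :=
  (Module.finrank ℂ ↥(⨆ μ : {μ : ℝ // 0 < μ}, Module.End.eigenspace T (μ : ℂ)) : ℤ) -
  (Module.finrank ℂ ↥(⨆ μ : {μ : ℝ // μ < (0 : ℝ)}, Module.End.eigenspace T (μ : ℂ)) : ℤ)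

section Aux

variable {H : Type*} [NormedAddCommGroup H] [InnerProductSpace ℂ H]

private lemma ortho_eig {T : H →ₗ[ℂ] H} (hT : T.IsSymmetric) {μ ν : ℝ} (h : μ ≠ ν) :
    Submodule.IsOrtho (Module.End.eigenspace T (μ : ℂ)) (Module.End.eigenspace T (ν : ℂ)) := by
  intro x hx
  rw [Module.End.mem_eigenspace_iff] at hx
  rw [Submodule.mem_orthogonal]
  intro y hy
  rw [Module.End.mem_eigenspace_iff] at hy
  have h1 := hT y x
  rw [hx, hy, inner_smul_left, inner_smul_right, Complex.conj_ofReal] at h1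
  have h2 : ((ν : ℂ) - (μ : ℂ)) * inner ℂ y x = 0 := by ring_nf; linear_combination h1
  rcases mul_eq_zero.mp h2 with h3 | h3
  · exfalso
    apply h
    have : (ν : ℂ) = (μ : ℂ) := by linear_combination h3
    exact_mod_cast this.symm
  · exact h3

private lemma finrank_ker_restrict [FiniteDimensional ℂ H] {p q : Submodule ℂ H}
    (f : H →ₗ[ℂ] H) (hf : ∀ x ∈ p, f x ∈ q) :
    finrank ℂ (ker (f.restrict hf)) = finrank ℂ ↥(p ⊓ ker f) := by
  rw [LinearMap.ker_restrict hf]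
  have h1 : Submodule.comap p.subtype (ker f) = Submodule.comap p.subtype (p ⊓ ker f) := by
    rw [Submodule.comap_inf, Submodule.comap_subtype_self, top_inf_eq]
  rw [h1]
  exact (Submodule.comapSubtypeEquivOfLe inf_le_left).finrank_eq

private lemma eta_plus [FiniteDimensional ℂ H]
    (Γ D : H →ₗ[ℂ] H) (hΓsa : Γ.IsSymmetric) (hΓinv : Γ ∘ₗ Γ = LinearMap.id)
    (hDsa : D.IsSymmetric) (hanti : D ∘ₗ Γ = -(Γ ∘ₗ D)) {m : ℝ} (hm : 0 < m) :
    eta (D + (m : ℂ) • Γ) =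
      (finrank ℂ ↥(Module.End.eigenspace Γ 1 ⊓ ker D) : ℤ) -
      (finrank ℂ ↥(Module.End.eigenspace Γ (-1) ⊓ ker D) : ℤ) := by
  set T : H →ₗ[ℂ] H := D + (m : ℂ) • Γ with hTdef
  have hΓ2 : ∀ x, Γ (Γ x) = x := fun x => by
    simpa using LinearMap.congr_fun hΓinv x
  have hDΓ : ∀ x, D (Γ x) = -(Γ (D x)) := fun x => by
    simpa using LinearMap.congr_fun hanti x
  have hTapp : ∀ x, T x = D x + (m : ℂ) • Γ x := fun x => rfl
  have hTsym : T.IsSymmetric := by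
    intro x y
    simp only [hTapp, inner_add_left, inner_add_right, inner_smul_left, inner_smul_right,
      Complex.conj_ofReal, hDsa x y, hΓsa x y]
  have hT2 : ∀ x, T (T x) = D (D x) + ((m : ℂ) * m) • x := by
    intro x
    simp only [hTapp, map_add, map_smul, hDΓ, hΓ2]
    module
  have hmC : ((m : ℝ) : ℂ) ≠ 0 := Complex.ofReal_ne_zero.mpr hm.ne'
  -- eigenspace at m
  have hEm : Module.End.eigenspace T ((m : ℝ) : ℂ) = Module.End.eigenspace Γ 1 ⊓ ker D := by
    ext x
    rw [Submodule.mem_inf, Module.End.mem_eigenspace_iff, Module.End.mem_eigenspace_iff, mem_ker]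
    constructor
    · intro hx
      have hTTx : T (T x) = ((m : ℂ) * m) • x := by
        rw [hx, map_smul, hx, smul_smul]
      have h3 : D (D x) + ((m : ℂ) * m) • x = ((m : ℂ) * m) • x := (hT2 x).symm.trans hTTx
      have hDDx : D (D x) = 0 := add_eq_right.mp h3
      have hDx : D x = 0 := by
        have h4 : (inner ℂ (D x) (D x) : ℂ) = 0 := by
          rw [hDsa x (D x), hDDx, inner_zero_right]
        exact inner_self_eq_zero.mp h4
      have h5 : (m : ℂ) • Γ x = (m : ℂ) • x := by
        have h6 : D x + (m : ℂ) • Γ x = (m : ℂ) • x := by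
          rw [← hTapp]; exact hx
        rwa [hDx, zero_add] at h6
      have hΓx : Γ x = x := smul_right_injective H hmC h5
      exact ⟨by rw [hΓx, one_smul], hDx⟩
    · rintro ⟨h1, h2⟩
      show T x = _
      rw [hTapp, h1, h2, one_smul, zero_add]
  -- eigenspace at -m
  have hEnegm : Module.End.eigenspace T (((-m : ℝ)) : ℂ) =
      Module.End.eigenspace Γ (-1) ⊓ ker D := by
    have hc : (((-m : ℝ)) : ℂ) = -((m : ℝ) : ℂ) := by push_cast; ring
    ext x
    rw [Submodule.mem_inf, Module.End.mem_eigenspace_iff, Module.End.mem_eigenspace_iff, mem_ker,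
      hc]
    constructor
    · intro hx
      have hTTx : T (T x) = ((m : ℂ) * m) • x := by
        rw [hx, map_smul, hx, smul_smul]
        congr 1
        ring
      have h3 : D (D x) + ((m : ℂ) * m) • x = ((m : ℂ) * m) • x := (hT2 x).symm.trans hTTx
      have hDDx : D (D x) = 0 := add_eq_right.mp h3
      have hDx : D x = 0 := by
        have h4 : (inner ℂ (D x) (D x) : ℂ) = 0 := by
          rw [hDsa x (D x), hDDx, inner_zero_right]
        exact inner_self_eq_zero.mp h4
      have h5 : (m : ℂ) • Γ x = (m : ℂ) • ((-1 : ℂ) • x) := by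
        have h6 : D x + (m : ℂ) • Γ x = (-((m : ℝ) : ℂ)) • x := by
          rw [← hTapp]; exact hx
        rw [hDx, zero_add] at h6
        rw [h6]
        module
      have hΓx : Γ x = (-1 : ℂ) • x := smul_right_injective H hmC h5
      exact ⟨hΓx, hDx⟩
    · rintro ⟨h1, h2⟩
      show T x = _
      rw [hTapp, h1, h2]
      module
  -- kernel of D sits inside the two special eigenspaces
  have hker : ker D ≤ Module.End.eigenspace T ((m : ℝ) : ℂ) ⊔
      Module.End.eigenspace T (((-m : ℝ)) : ℂ) := by
    intro x hx
    rw [mem_ker] at hx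
    have ha : ((2 : ℂ)⁻¹) • (x + Γ x) ∈ Module.End.eigenspace T ((m : ℝ) : ℂ) := by
      rw [Module.End.mem_eigenspace_iff, map_smul, map_add, hTapp, hTapp, hDΓ, hx, map_zero,
        hΓ2]
      module
    have hb : ((2 : ℂ)⁻¹) • (x - Γ x) ∈ Module.End.eigenspace T (((-m : ℝ)) : ℂ) := by
      rw [Module.End.mem_eigenspace_iff, map_smul, map_sub, hTapp, hTapp, hDΓ, hx, map_zero,
        hΓ2]
      push_cast
      module
    have hxsum : x = ((2 : ℂ)⁻¹) • (x + Γ x) + ((2 : ℂ)⁻¹) • (x - Γ x) := by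
      match_scalars <;> norm_num
    rw [hxsum]
    exact Submodule.add_mem_sup ha hb
  -- the remaining eigenspaces
  set P' : Submodule ℂ H :=
    ⨆ μ : {μ : ℝ // 0 < μ ∧ μ ≠ m}, Module.End.eigenspace T ((μ : ℝ) : ℂ) with hP'def
  set N' : Submodule ℂ H :=
    ⨆ μ : {μ : ℝ // μ < 0 ∧ μ ≠ -m}, Module.End.eigenspace T ((μ : ℝ) : ℂ) with hN'def
  have hPsup : (⨆ μ : {μ : ℝ // 0 < μ}, Module.End.eigenspace T ((μ : ℝ) : ℂ)) =
      Module.End.eigenspace T ((m : ℝ) : ℂ) ⊔ P' := by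
    apply le_antisymm
    · apply iSup_le
      rintro ⟨μ, hμ⟩
      by_cases hμm : μ = m
      · subst hμm
        exact le_sup_of_le_left le_rfl
      · exact le_sup_of_le_right
          (le_iSup (fun ν : {ν : ℝ // 0 < ν ∧ ν ≠ m} =>
            Module.End.eigenspace T ((ν : ℝ) : ℂ)) ⟨μ, hμ, hμm⟩)
    · apply sup_le
      · exact le_iSup (fun ν : {ν : ℝ // 0 < ν} =>
          Module.End.eigenspace T ((ν : ℝ) : ℂ)) ⟨m, hm⟩
      · apply iSup_le
        rintro ⟨μ, hμ1, _⟩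
        exact le_iSup (fun ν : {ν : ℝ // 0 < ν} =>
          Module.End.eigenspace T ((ν : ℝ) : ℂ)) ⟨μ, hμ1⟩
  have hNsup : (⨆ μ : {μ : ℝ // μ < (0 : ℝ)}, Module.End.eigenspace T ((μ : ℝ) : ℂ)) =
      Module.End.eigenspace T (((-m : ℝ)) : ℂ) ⊔ N' := by
    apply le_antisymm
    · apply iSup_le
      rintro ⟨μ, hμ⟩
      by_cases hμm : μ = -m
      · subst hμm
        exact le_sup_of_le_left le_rfl
      · exact le_sup_of_le_right
          (le_iSup (fun ν : {ν : ℝ // ν < 0 ∧ ν ≠ -m} =>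
            Module.End.eigenspace T ((ν : ℝ) : ℂ)) ⟨μ, hμ, hμm⟩)
    · apply sup_le
      · exact le_iSup (fun ν : {ν : ℝ // ν < 0} =>
          Module.End.eigenspace T ((ν : ℝ) : ℂ)) ⟨-m, by linarith⟩
      · apply iSup_le
        rintro ⟨μ, hμ1, _⟩
        exact le_iSup (fun ν : {ν : ℝ // ν < 0} =>
          Module.End.eigenspace T ((ν : ℝ) : ℂ)) ⟨μ, hμ1⟩
  -- orthogonality facts
  have oPm : Submodule.IsOrtho (Module.End.eigenspace T ((m : ℝ) : ℂ)) P' :=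
    Submodule.isOrtho_iSup_right.mpr fun μ => ortho_eig hTsym (Ne.symm μ.2.2)
  have oNm : Submodule.IsOrtho (Module.End.eigenspace T (((-m : ℝ)) : ℂ)) N' :=
    Submodule.isOrtho_iSup_right.mpr fun μ => ortho_eig hTsym (Ne.symm μ.2.2)
  have oP'ker : Submodule.IsOrtho P' (Module.End.eigenspace T ((m : ℝ) : ℂ) ⊔
      Module.End.eigenspace T (((-m : ℝ)) : ℂ)) := by
    rw [hP'def]
    rw [Submodule.isOrtho_iSup_left]
    intro μ
    rw [Submodule.isOrtho_sup_right]
    constructor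
    · exact ortho_eig hTsym μ.2.2
    · exact ortho_eig hTsym (by have := μ.2.1; intro h; rw [h] at this; linarith)
  have oN'ker : Submodule.IsOrtho N' (Module.End.eigenspace T ((m : ℝ) : ℂ) ⊔
      Module.End.eigenspace T (((-m : ℝ)) : ℂ)) := by
    rw [hN'def]
    rw [Submodule.isOrtho_iSup_left]
    intro μ
    rw [Submodule.isOrtho_sup_right]
    constructor
    · exact ortho_eig hTsym (by have := μ.2.1; intro h; rw [h] at this; linarith)
    · exact ortho_eig hTsym μ.2.2
  -- rank additivity
  have hPrank : finrank ℂ ↥(Module.End.eigenspace T ((m : ℝ) : ℂ) ⊔ P') =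
      finrank ℂ ↥(Module.End.eigenspace T ((m : ℝ) : ℂ)) + finrank ℂ ↥P' := by
    have h := Submodule.finrank_sup_add_finrank_inf_eq
      (Module.End.eigenspace T ((m : ℝ) : ℂ)) P'
    rwa [disjoint_iff.mp oPm.disjoint, finrank_bot, add_zero] at h
  have hNrank : finrank ℂ ↥(Module.End.eigenspace T (((-m : ℝ)) : ℂ) ⊔ N') =
      finrank ℂ ↥(Module.End.eigenspace T (((-m : ℝ)) : ℂ)) + finrank ℂ ↥N' := by
    have h := Submodule.finrank_sup_add_finrank_inf_eq
      (Module.End.eigenspace T (((-m : ℝ)) : ℂ)) N'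
    rwa [disjoint_iff.mp oNm.disjoint, finrank_bot, add_zero] at h
  -- the map Γ ∘ D anticommutes with T
  have hanti2 : ∀ x, T ((Γ ∘ₗ D) x) = -((Γ ∘ₗ D) (T x)) := by
    intro x
    simp only [comp_apply, hTapp, map_add, map_smul, hDΓ, hΓ2, map_neg]
    module
  have hmap : ∀ (μ : ℝ), ∀ x ∈ Module.End.eigenspace T ((μ : ℝ) : ℂ),
      (Γ ∘ₗ D) x ∈ Module.End.eigenspace T (((-μ : ℝ)) : ℂ) := by
    intro μ x hx
    rw [Module.End.mem_eigenspace_iff] at hx ⊢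
    rw [hanti2, hx, map_smul]
    push_cast
    module
  -- vanishing lemma
  have hker0 : ∀ (W : Submodule ℂ H),
      Submodule.IsOrtho W (Module.End.eigenspace T ((m : ℝ) : ℂ) ⊔
        Module.End.eigenspace T (((-m : ℝ)) : ℂ)) →
      ∀ x ∈ W, (Γ ∘ₗ D) x = 0 → x = 0 := by
    intro W hW x hxW hx0
    have hDx : D x = 0 := by
      have h1 : Γ (Γ (D x)) = Γ 0 := congrArg Γ hx0
      rwa [hΓ2, map_zero] at h1
    have hxk := hker (mem_ker.mpr hDx)
    exact Submodule.disjoint_def.mp hW.disjoint x hxW hxk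
  -- the cross maps
  have hPN : ∀ x ∈ P', (Γ ∘ₗ D) x ∈ N' := by
    intro x hx
    have hle : P' ≤ Submodule.comap (Γ ∘ₗ D) N' := by
      rw [hP'def]
      apply iSup_le
      rintro ⟨μ, hμ1, hμ2⟩
      intro y hy
      rw [Submodule.mem_comap]
      exact le_iSup (fun ν : {ν : ℝ // ν < 0 ∧ ν ≠ -m} =>
        Module.End.eigenspace T ((ν : ℝ) : ℂ))
        ⟨-μ, by linarith, fun h => hμ2 (by linarith [neg_injective h])⟩ (hmap μ y hy)
    exact hle hx
  have hNP : ∀ x ∈ N', (Γ ∘ₗ D) x ∈ P' := by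
    intro x hx
    have hle : N' ≤ Submodule.comap (Γ ∘ₗ D) P' := by
      rw [hN'def]
      apply iSup_le
      rintro ⟨μ, hμ1, hμ2⟩
      intro y hy
      rw [Submodule.mem_comap]
      exact le_iSup (fun ν : {ν : ℝ // 0 < ν ∧ ν ≠ m} =>
        Module.End.eigenspace T ((ν : ℝ) : ℂ))
        ⟨-μ, by linarith, fun h => hμ2 (by rw [← h]; ring)⟩ (hmap μ y hy)
    exact hle hx
  -- equal ranks of P' and N'
  have hfr1 : finrank ℂ ↥P' ≤ finrank ℂ ↥N' := by
    apply LinearMap.finrank_le_finrank_of_injective (f := (Γ ∘ₗ D).restrict hPN)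
    rw [← LinearMap.ker_eq_bot, LinearMap.ker_restrict hPN, eq_bot_iff]
    rintro ⟨x, hx⟩ hmem
    have h0 : (Γ ∘ₗ D) x = 0 := hmem
    exact (Submodule.mem_bot ℂ).mpr (Subtype.ext (hker0 P' oP'ker x hx h0))
  have hfr2 : finrank ℂ ↥N' ≤ finrank ℂ ↥P' := by
    apply LinearMap.finrank_le_finrank_of_injective (f := (Γ ∘ₗ D).restrict hNP)
    rw [← LinearMap.ker_eq_bot, LinearMap.ker_restrict hNP, eq_bot_iff]
    rintro ⟨x, hx⟩ hmem
    have h0 : (Γ ∘ₗ D) x = 0 := hmem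
    exact (Submodule.mem_bot ℂ).mpr (Subtype.ext (hker0 N' oN'ker x hx h0))
  have hfr : finrank ℂ ↥P' = finrank ℂ ↥N' := le_antisymm hfr1 hfr2
  -- assemble
  unfold eta
  rw [hPsup, hNsup, hPrank, hNrank, hfr, hEm, hEnegm]
  push_cast
  ring

end Aux

theorem index_eq_half_eta_difference
    {H : Type*} [NormedAddCommGroup H] [InnerProductSpace ℂ H] [FiniteDimensional ℂ H]
    (Γ D : H →ₗ[ℂ] H)
    (hΓsa : Γ.IsSymmetric) (hΓinv : Γ ∘ₗ Γ = LinearMap.id)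
    (hDsa : D.IsSymmetric) (hanti : D ∘ₗ Γ = -(Γ ∘ₗ D))
    -- `H₊` and `H₋` are the `±1`-eigenspaces of `Γ`
    (hp : ∀ x ∈ Module.End.eigenspace Γ (1 : ℂ), D x ∈ Module.End.eigenspace Γ (-1 : ℂ))
    (hm : ∀ x ∈ Module.End.eigenspace Γ (-1 : ℂ), D x ∈ Module.End.eigenspace Γ (1 : ℂ))
    (m : ℝ) (hmpos : 0 < m) :
    2 * ((Module.finrank ℂ (LinearMap.ker (D.restrict hp)) : ℤ) -
          (Module.finrank ℂ (LinearMap.ker (D.restrict hm)) : ℤ)) =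
      eta (D + (m : ℂ) • Γ) - eta (D - (m : ℂ) • Γ) := by
  have key1 := eta_plus Γ D hΓsa hΓinv hDsa hanti hmpos
  have hΓsa' : (-Γ).IsSymmetric := by
    intro x y
    simp only [LinearMap.neg_apply, inner_neg_left, inner_neg_right, hΓsa x y]
  have hΓinv' : (-Γ) ∘ₗ (-Γ) = LinearMap.id := by
    rw [LinearMap.neg_comp, LinearMap.comp_neg, neg_neg, hΓinv]
  have hanti' : D ∘ₗ (-Γ) = -((-Γ) ∘ₗ D) := by
    rw [LinearMap.comp_neg, hanti, LinearMap.neg_comp]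
  have key2 := eta_plus (-Γ) D hΓsa' hΓinv' hDsa hanti' hmpos
  have e1 : Module.End.eigenspace (-Γ) (1 : ℂ) = Module.End.eigenspace Γ (-1 : ℂ) := by
    ext x
    rw [Module.End.mem_eigenspace_iff, Module.End.mem_eigenspace_iff]
    simp only [LinearMap.neg_apply, one_smul, neg_smul]
    exact neg_eq_iff_eq_neg
  have e2 : Module.End.eigenspace (-Γ) (-1 : ℂ) = Module.End.eigenspace Γ (1 : ℂ) := by
    ext x
    rw [Module.End.mem_eigenspace_iff, Module.End.mem_eigenspace_iff]
    simp only [LinearMap.neg_apply, one_smul, neg_smul]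
    exact neg_inj
  rw [e1, e2] at key2
  have hDmΓ : D - (m : ℂ) • Γ = D + (m : ℂ) • (-Γ) := by
    rw [smul_neg, ← sub_eq_add_neg]
  have ra : (finrank ℂ (LinearMap.ker (D.restrict hp)) : ℤ) =
      (finrank ℂ ↥(Module.End.eigenspace Γ 1 ⊓ ker D) : ℤ) := by
    exact_mod_cast finrank_ker_restrict D hp
  have rb : (finrank ℂ (LinearMap.ker (D.restrict hm)) : ℤ) =
      (finrank ℂ ↥(Module.End.eigenspace Γ (-1) ⊓ ker D) : ℤ) := by
    exact_mod_cast finrank_ker_restrict D hm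
  rw [hDmΓ, key1, key2, ra, rb]
  ring
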